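/- Let τ : C → T and τ̃ : C → T̃ be weak stability functions with τ̃ dominating τ, and let κ : {1,…,n} → C with S({1,…,n},≤,κ,τ,τ̃) ≠ 0. Then τ̃(κ(i)) = τ̃(κ(j)) for all i, j ∈ {1,…,n}; that is, τ̃∘κ is constant. -/

import Mathlib

open scoped Classical
open Finset Function

/-- A weak stability function on `C ⊆ A` with values in a total order:
whenever `α, γ ∈ C` (so that `β = α + γ`), either `τ α ≤ τ β ≤ τ γ` or
`τ α ≥ τ β ≥ τ γ`. -/
def WeakStability {A T : Type*} [AddCommGroup A] [LinearOrder T] (C : Set A) (τ : A → T) : Prop :=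
  ∀ α γ : A, α ∈ C → γ ∈ C →
    (τ α ≤ τ (α + γ) ∧ τ (α + γ) ≤ τ γ) ∨ (τ γ ≤ τ (α + γ) ∧ τ (α + γ) ≤ τ α)

/-- Sum `κ 0 + ⋯ + κ i`. -/
def lowSum {A : Type*} [AddCommGroup A] (κ : ℕ → A) (i : ℕ) : A :=
  ∑ j ∈ Finset.range (i + 1), κ j

/-- Sum `κ (i+1) + ⋯ + κ (n-1)`. -/
def highSum {A : Type*} [AddCommGroup A] (κ : ℕ → A) (i n : ℕ) : A :=
  ∑ j ∈ Finset.Ico (i + 1) n, κ j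

/-- Condition (a) at position `i` in the definition of the coefficient `S`. -/
def SCondA {A T T' : Type*} [AddCommGroup A] [LinearOrder T] [LinearOrder T']
    (τ : A → T) (τ' : A → T') (n : ℕ) (κ : ℕ → A) (i : ℕ) : Prop :=
  τ (κ i) ≤ τ (κ (i + 1)) ∧ τ' (highSum κ i n) < τ' (lowSum κ i)

/-- Condition (b) at position `i` in the definition of the coefficient `S`. -/
def SCondB {A T T' : Type*} [AddCommGroup A] [LinearOrder T] [LinearOrder T']
    (τ : A → T) (τ' : A → T') (n : ℕ) (κ : ℕ → A) (i : ℕ) : Prop :=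
  τ (κ (i + 1)) < τ (κ i) ∧ τ' (lowSum κ i) ≤ τ' (highSum κ i n)

/-- The transformation coefficient `S({1,…,n},≤,κ,τ,τ')` for the sequence
`κ 0, …, κ (n-1)` (indexed from `0`). -/
noncomputable def Scoeff {A T T' : Type*} [AddCommGroup A] [LinearOrder T] [LinearOrder T']
    (τ : A → T) (τ' : A → T') (n : ℕ) (κ : ℕ → A) : ℤ :=
  if ∀ i ∈ Finset.range (n - 1), SCondA τ τ' n κ i ∨ SCondB τ τ' n κ i then
    (-1) ^ ((Finset.range (n - 1)).filter (SCondA τ τ' n κ)).card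
  else 0

/-- The sequence `κ 0, …, κ (n-1)` is `τ`-reversing. -/
def Reversing {A T : Type*} [AddCommGroup A] [LinearOrder T] (τ : A → T) (n : ℕ) (κ : ℕ → A) :
    Prop :=
  ∀ i, i + 1 < n → τ (κ (i + 1)) < τ (κ i)

/-- The sequence `κ 0, …, κ (n-1)` is `τ`-semistable. -/
def Semistable {A T : Type*} [AddCommGroup A] [LinearOrder T] (τ : A → T) (n : ℕ) (κ : ℕ → A) :
    Prop :=
  ∀ i, i + 1 < n → τ (lowSum κ i) ≤ τ (highSum κ i n)

/-- Extend a `Fin n`-indexed sequence to `ℕ` by zero. -/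
def toSeq {A : Type*} [AddCommGroup A] {n : ℕ} (κ : Fin n → A) : ℕ → A :=
  fun j => if h : j < n then κ ⟨j, h⟩ else 0

/-- The subsequence of `κ` on a subset `s ⊆ Fin n`, enumerated in increasing order. -/
noncomputable def fiberSeq {A : Type*} [AddCommGroup A] {n : ℕ} (κ : Fin n → A)
    (s : Finset (Fin n)) : ℕ → A :=
  fun j => if h : j < s.card then κ (s.orderIsoOfFin rfl ⟨j, h⟩).1 else 0

/-- The transformation coefficient `U({1,…,n},≤,κ,τ,τ')`. -/
noncomputable def Ucoeff {A T T' : Type*} [AddCommGroup A] [LinearOrder T] [LinearOrder T']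
    (τ : A → T) (τ' : A → T') (n : ℕ) (κ : ℕ → A) : ℚ :=
  ∑ l ∈ Finset.Icc 1 n, ∑ m ∈ Finset.Icc l n,
    ∑ p ∈ Finset.univ.filter
        (fun p : (Fin n → Fin m) × (Fin m → Fin l) =>
          Surjective p.1 ∧ Monotone p.1 ∧ Surjective p.2 ∧ Monotone p.2),
      (if (∀ i : Fin n, τ (κ i.1) =
              τ (∑ j ∈ Finset.univ.filter (fun j : Fin n => p.1 j = p.1 i), κ j.1)) ∧
          (∀ a : Fin l,
              τ' (∑ j ∈ Finset.univ.filter (fun j : Fin n => p.2 (p.1 j) = a), κ j.1) =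
              τ' (∑ j ∈ Finset.range n, κ j)) then
        (∏ a : Fin l,
          ((Scoeff τ τ' (Finset.univ.filter (fun b : Fin m => p.2 b = a)).card
            (fiberSeq
              (fun b : Fin m => ∑ j ∈ Finset.univ.filter (fun j : Fin n => p.1 j = b), κ j.1)
              (Finset.univ.filter (fun b : Fin m => p.2 b = a)))) : ℚ))
        * ((-1 : ℚ) ^ (l - 1) / (l : ℚ))
        * ∏ b : Fin m,
            ((1 : ℚ) / (Nat.factorial (Finset.univ.filter (fun j : Fin n => p.1 j = b)).card : ℚ))
      else 0)

theorem stmt17 {A T T' : Type*} [AddCommGroup A] [LinearOrder T] [LinearOrder T']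
    (C : Set A) (hC : ∀ a b : A, a ∈ C → b ∈ C → a + b ∈ C) (h0 : (0 : A) ∉ C)
    (τ : A → T) (τt : A → T') (hτ : WeakStability C τ) (hτt : WeakStability C τt)
    (hdom : ∀ α β : A, α ∈ C → β ∈ C → τ α ≤ τ β → τt α ≤ τt β)
    (n : ℕ) (κ : ℕ → A) (hκ : ∀ i, i < n → κ i ∈ C)
    (hS : Scoeff τ τt n κ ≠ 0) :
    ∀ i j, i < n → j < n → τt (κ i) = τt (κ j) := by
    classical
  -- Extract the condition from `Scoeff ≠ 0`.
  have hcond : ∀ i, i + 1 < n → SCondA τ τt n κ i ∨ SCondB τ τt n κ i := by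
    by_contra h
    push_neg at h
    obtain ⟨i, hi, hni⟩ := h
    have hneg : ¬ ∀ i ∈ Finset.range (n - 1), SCondA τ τt n κ i ∨ SCondB τ τt n κ i := by
      intro hall
      rcases hall i (Finset.mem_range.mpr (by omega)) with h' | h'
      · exact hni.1 h'
      · exact hni.2 h'
    apply hS
    unfold Scoeff
    rw [if_neg hneg]
  -- Memberships of partial sums in C.
  have hmem' : ∀ d a : ℕ, a + d + 1 ≤ n → (∑ j ∈ Finset.Ico a (a + d + 1), κ j) ∈ C := by
    intro d
    induction d with
    | zero =>
      intro a h
      rw [Finset.sum_Ico_succ_top (le_refl a), Finset.Ico_self, Finset.sum_empty, zero_add]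
      exact hκ a (by omega)
    | succ d ih =>
      intro a h
      rw [show a + (d + 1) + 1 = (a + d + 1) + 1 from rfl,
        Finset.sum_Ico_succ_top (by omega)]
      exact hC _ _ (ih a (by omega)) (hκ _ (by omega))
  have hmem : ∀ a b : ℕ, a < b → b ≤ n → (∑ j ∈ Finset.Ico a b, κ j) ∈ C := by
    intro a b hab hbn
    obtain ⟨d, rfl⟩ : ∃ d, b = a + d + 1 := ⟨b - a - 1, by omega⟩
    exact hmem' d a hbn
  have mlow : ∀ i, i < n → lowSum κ i ∈ C := by
    intro i hi
    have e : lowSum κ i = ∑ j ∈ Finset.Ico 0 (i + 1), κ j := by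
      rw [lowSum, Finset.range_eq_Ico]
    rw [e]
    exact hmem 0 (i + 1) (by omega) (by omega)
  have mhigh : ∀ i, i + 1 < n → highSum κ i n ∈ C := by
    intro i hi
    exact hmem (i + 1) n (by omega) le_rfl
  have ftot : ∀ i, i < n →
      lowSum κ i + highSum κ i n = ∑ j ∈ Finset.range n, κ j := by
    intro i hi
    rw [lowSum, highSum, Finset.range_eq_Ico]
    exact (Finset.sum_Ico_consecutive κ (show 0 ≤ i + 1 by omega) (show i + 1 ≤ n by omega)).trans (by rw [Finset.range_eq_Ico])
  have flow : ∀ i : ℕ, lowSum κ (i + 1) = lowSum κ i + κ (i + 1) := by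
    intro i
    rw [lowSum, lowSum, Finset.sum_range_succ]
  have fhigh : ∀ i, i + 1 < n → highSum κ i n = κ (i + 1) + highSum κ (i + 1) n := by
    intro i hi
    rw [highSum, highSum]
    exact Finset.sum_eq_sum_Ico_succ_bot (by omega) _
  have hL0 : lowSum κ 0 = κ 0 := by simp [lowSum]
  -- seesaw facts for τt
  have st : ∀ i, i + 1 < n →
      (τt (lowSum κ i) ≤ τt (∑ j ∈ Finset.range n, κ j) ∧
        τt (∑ j ∈ Finset.range n, κ j) ≤ τt (highSum κ i n)) ∨
      (τt (highSum κ i n) ≤ τt (∑ j ∈ Finset.range n, κ j) ∧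
        τt (∑ j ∈ Finset.range n, κ j) ≤ τt (lowSum κ i)) := by
    intro i hi
    have h := hτt (lowSum κ i) (highSum κ i n) (mlow i (by omega)) (mhigh i hi)
    rwa [ftot i (by omega)] at h
  have sL : ∀ i, i + 1 < n →
      (τt (lowSum κ i) ≤ τt (lowSum κ (i + 1)) ∧ τt (lowSum κ (i + 1)) ≤ τt (κ (i + 1))) ∨
      (τt (κ (i + 1)) ≤ τt (lowSum κ (i + 1)) ∧ τt (lowSum κ (i + 1)) ≤ τt (lowSum κ i)) := by
    intro i hi
    have h := hτt (lowSum κ i) (κ (i + 1)) (mlow i (by omega)) (hκ (i + 1) hi)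
    rwa [← flow i] at h
  have sH : ∀ i, i + 2 < n →
      (τt (κ (i + 1)) ≤ τt (highSum κ i n) ∧ τt (highSum κ i n) ≤ τt (highSum κ (i + 1) n)) ∨
      (τt (highSum κ (i + 1) n) ≤ τt (highSum κ i n) ∧
        τt (highSum κ i n) ≤ τt (κ (i + 1))) := by
    intro i hi
    have h := hτt (κ (i + 1)) (highSum κ (i + 1) n) (hκ _ (by omega)) (mhigh (i + 1) (by omega))
    rwa [← fhigh i (by omega)] at h
  -- the master dichotomy
  have hab : ∀ i, i + 1 < n →
      (τ (κ i) ≤ τ (κ (i + 1)) ∧ τt (highSum κ i n) < τt (lowSum κ i) ∧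
        τt (highSum κ i n) ≤ τt (∑ j ∈ Finset.range n, κ j) ∧
        τt (∑ j ∈ Finset.range n, κ j) ≤ τt (lowSum κ i)) ∨
      (τ (κ (i + 1)) < τ (κ i) ∧
        τt (lowSum κ i) ≤ τt (∑ j ∈ Finset.range n, κ j) ∧
        τt (∑ j ∈ Finset.range n, κ j) ≤ τt (highSum κ i n)) := by
    intro i hi
    have hc := hcond i hi
    unfold SCondA SCondB at hc
    rcases hc with ⟨h1, h2⟩ | ⟨h1, h2⟩
    · left
      refine ⟨h1, h2, ?_⟩
      rcases st i hi with ⟨h3, h4⟩ | ⟨h3, h4⟩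
      · exact absurd (le_trans h3 h4) (not_le.mpr h2)
      · exact ⟨h3, h4⟩
    · right
      refine ⟨h1, ?_⟩
      rcases st i hi with ⟨h3, h4⟩ | ⟨h3, h4⟩
      · exact ⟨h3, h4⟩
      · exact ⟨le_trans h2 h3, le_trans h4 h2⟩
  have hasc : ∀ i, i + 1 < n → τt (κ i) < τt (κ (i + 1)) →
      τt (highSum κ i n) < τt (lowSum κ i) ∧
      τt (highSum κ i n) ≤ τt (∑ j ∈ Finset.range n, κ j) ∧
      τt (∑ j ∈ Finset.range n, κ j) ≤ τt (lowSum κ i) := by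
    intro i hi hu
    rcases hab i hi with ⟨_, h2, h3, h4⟩ | ⟨h1, _, _⟩
    · exact ⟨h2, h3, h4⟩
    · exact absurd (hdom _ _ (hκ _ (by omega)) (hκ _ (by omega)) (le_of_lt h1))
        (not_le.mpr hu)
  have hdesc : ∀ i, i + 1 < n → τt (κ (i + 1)) < τt (κ i) →
      τt (lowSum κ i) ≤ τt (∑ j ∈ Finset.range n, κ j) ∧
      τt (∑ j ∈ Finset.range n, κ j) ≤ τt (highSum κ i n) := by
    intro i hi hu
    rcases hab i hi with ⟨h1, _, _, _⟩ | ⟨_, h2, h3⟩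
    · exact absurd (hdom _ _ (hκ _ (by omega)) (hκ _ (by omega)) h1) (not_le.mpr hu)
    · exact ⟨h2, h3⟩
  -- the key step: no strict inequality can occur
  have key : ∀ i j, i < n → j < n → τt (κ i) < τt (κ j) → False := by
    intro i j hi hj hij
    have hij' : i ≠ j := by rintro rfl; exact lt_irrefl _ hij
    obtain ⟨N, rfl⟩ : ∃ N, n = N + 2 := ⟨n - 2, by omega⟩
    have Hlast : highSum κ N (N + 2) = κ (N + 1) := by
      rw [highSum, Finset.sum_eq_sum_Ico_succ_bot (by omega), Finset.Ico_self,
        Finset.sum_empty, add_zero]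
    -- walk lemmas
    have walkL_down : ∀ d a, a + d < N + 2 →
        τt (lowSum κ (a + d)) ≤ τt (∑ jj ∈ Finset.range (N + 2), κ jj) →
        (∀ k, a < k → k ≤ a + d → τt (∑ jj ∈ Finset.range (N + 2), κ jj) < τt (κ k)) →
        τt (lowSum κ a) ≤ τt (lowSum κ (a + d)) := by
      intro d
      induction d with
      | zero => intro a _ _ _; exact le_refl _
      | succ d ih =>
        intro a hb hLb hk
        rw [show a + (d + 1) = a + d + 1 from rfl] at hb hLb hk ⊢
        have hub := hk (a + d + 1) (by omega) (by omega)
        rcases sL (a + d) (by omega) with ⟨h1, h2⟩ | ⟨h1, h2⟩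
        · exact le_trans
            (ih a (by omega) (le_trans h1 hLb) (fun k hk1 hk2 => hk k hk1 (by omega))) h1
        · exact absurd (lt_of_lt_of_le hub h1) (not_lt.mpr hLb)
    have walkL_up : ∀ d a, a + d < N + 2 →
        τt (∑ jj ∈ Finset.range (N + 2), κ jj) ≤ τt (lowSum κ (a + d)) →
        (∀ k, a < k → k ≤ a + d → τt (κ k) < τt (∑ jj ∈ Finset.range (N + 2), κ jj)) →
        τt (lowSum κ (a + d)) ≤ τt (lowSum κ a) := by
      intro d
      induction d with
      | zero => intro a _ _ _; exact le_refl _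
      | succ d ih =>
        intro a hb hLb hk
        rw [show a + (d + 1) = a + d + 1 from rfl] at hb hLb hk ⊢
        have hub := hk (a + d + 1) (by omega) (by omega)
        rcases sL (a + d) (by omega) with ⟨h1, h2⟩ | ⟨h1, h2⟩
        · exact absurd (lt_of_le_of_lt h2 hub) (not_lt.mpr hLb)
        · exact le_trans h2
            (ih a (by omega) (le_trans hLb h2) (fun k hk1 hk2 => hk k hk1 (by omega)))
    have walkH_down : ∀ d a, a + d + 1 < N + 2 →
        τt (highSum κ a (N + 2)) ≤ τt (∑ jj ∈ Finset.range (N + 2), κ jj) →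
        (∀ k, a < k → k ≤ a + d → τt (∑ jj ∈ Finset.range (N + 2), κ jj) < τt (κ k)) →
        τt (highSum κ (a + d) (N + 2)) ≤ τt (highSum κ a (N + 2)) := by
      intro d
      induction d with
      | zero => intro a _ _ _; exact le_refl _
      | succ d ih =>
        intro a hb hHa hk
        rw [show a + (d + 1) = a + d + 1 from rfl] at hb hk ⊢
        have ihH := ih a (by omega) hHa (fun k hk1 hk2 => hk k hk1 (by omega))
        have hub := hk (a + d + 1) (by omega) (by omega)
        rcases sH (a + d) (by omega) with ⟨h1, h2⟩ | ⟨h1, h2⟩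
        · exact absurd (lt_of_lt_of_le (lt_of_lt_of_le hub h1) (le_trans ihH hHa))
            (lt_irrefl _)
        · exact le_trans h1 ihH
    have walkH_up : ∀ d a, a + d + 1 < N + 2 →
        τt (∑ jj ∈ Finset.range (N + 2), κ jj) ≤ τt (highSum κ a (N + 2)) →
        (∀ k, a < k → k ≤ a + d → τt (κ k) < τt (∑ jj ∈ Finset.range (N + 2), κ jj)) →
        τt (highSum κ a (N + 2)) ≤ τt (highSum κ (a + d) (N + 2)) := by
      intro d
      induction d with
      | zero => intro a _ _ _; exact le_refl _
      | succ d ih =>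
        intro a hb hHa hk
        rw [show a + (d + 1) = a + d + 1 from rfl] at hb hk ⊢
        have ihH := ih a (by omega) hHa (fun k hk1 hk2 => hk k hk1 (by omega))
        have hub := hk (a + d + 1) (by omega) (by omega)
        rcases sH (a + d) (by omega) with ⟨h1, h2⟩ | ⟨h1, h2⟩
        · exact le_trans ihH h2
        · exact absurd (lt_of_le_of_lt h2 hub) (not_lt.mpr (le_trans hHa ihH))
    -- max and min of τt ∘ κ on range (N+2)
    obtain ⟨qM, hqMmem, hqMmax'⟩ := Finset.exists_max_image (Finset.range (N + 2))
      (fun k => τt (κ k)) ⟨0, Finset.mem_range.mpr (by omega)⟩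
    obtain ⟨qm, hqmmem, hqmmin'⟩ := Finset.exists_min_image (Finset.range (N + 2))
      (fun k => τt (κ k)) ⟨0, Finset.mem_range.mpr (by omega)⟩
    have hqMmax : ∀ k, k < N + 2 → τt (κ k) ≤ τt (κ qM) := fun k hk =>
      hqMmax' k (Finset.mem_range.mpr hk)
    have hqmmin : ∀ k, k < N + 2 → τt (κ qm) ≤ τt (κ k) := fun k hk =>
      hqmmin' k (Finset.mem_range.mpr hk)
    rcases lt_or_ge (τt (∑ j ∈ Finset.range (N + 2), κ j)) (τt (κ qM)) with hI | hII
    · -- Case I : t < M.  Consider the last block of maxima.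
      have hQne : ((Finset.range (N + 2)).filter (fun k => τt (κ k) = τt (κ qM))).Nonempty :=
        ⟨qM, Finset.mem_filter.mpr ⟨hqMmem, rfl⟩⟩
      obtain ⟨q, hqn, hquM, hqmax⟩ : ∃ q, q < N + 2 ∧ τt (κ q) = τt (κ qM) ∧
          ∀ k, k < N + 2 → τt (κ k) = τt (κ qM) → k ≤ q := by
        refine ⟨Finset.max' _ hQne, ?_, ?_, ?_⟩
        · have := Finset.max'_mem _ hQne
          rw [Finset.mem_filter, Finset.mem_range] at this
          exact this.1
        · have := Finset.max'_mem _ hQne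
          rw [Finset.mem_filter] at this
          exact this.2
        · intro k h1 h2
          exact Finset.le_max' _ k (Finset.mem_filter.mpr ⟨Finset.mem_range.mpr h1, h2⟩)
      have hPex : ∃ p, ∀ k, p ≤ k → k ≤ q → τt (κ k) = τt (κ qM) :=
        ⟨q, fun k h1 h2 => by rw [le_antisymm h2 h1]; exact hquM⟩
      obtain ⟨p, hp, hpq, hpprev⟩ : ∃ p, (∀ k, p ≤ k → k ≤ q → τt (κ k) = τt (κ qM)) ∧
          p ≤ q ∧ ∀ r, p = r + 1 → τt (κ r) < τt (κ qM) := by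
        refine ⟨Nat.find hPex, Nat.find_spec hPex,
          Nat.find_min' hPex (fun k h1 h2 => by rw [le_antisymm h2 h1]; exact hquM), ?_⟩
        intro r hr
        have hnP := Nat.find_min hPex (m := r) (by omega)
        push_neg at hnP
        obtain ⟨k, h1, h2, h3⟩ := hnP
        have hkr : k = r := by
          rcases Nat.lt_or_ge k (Nat.find hPex) with h | h
          · omega
          · exact absurd (Nat.find_spec hPex k h h2) h3
        subst hkr
        have hle : τt (κ k) ≤ τt (κ qM) := hqMmax k (by omega)
        exact lt_of_le_of_ne hle h3
      rcases Nat.lt_or_ge q (N + 1) with hqN | hqtop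
      · -- q ≤ N : strict descent at q
        have hdq : τt (κ (q + 1)) < τt (κ q) := by
          have h1 : τt (κ (q + 1)) ≤ τt (κ qM) := hqMmax (q + 1) (by omega)
          have h2 : τt (κ (q + 1)) ≠ τt (κ qM) := fun h => by
            have := hqmax (q + 1) (by omega) h; omega
          rw [hquM]
          exact lt_of_le_of_ne h1 h2
        obtain ⟨hLq, htHq⟩ := hdesc q (by omega) hdq
        rcases Nat.eq_zero_or_pos p with hp0 | hppos
        · -- block starts at 0
          have hk0 : ∀ k, (0:ℕ) < k → k ≤ 0 + q →
              τt (∑ jj ∈ Finset.range (N + 2), κ jj) < τt (κ k) := by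
            intro k h1 h2
            rw [hp k (by omega) (by omega)]
            exact hI
          have hw := walkL_down q 0 (by omega) (by rw [Nat.zero_add]; exact hLq) hk0
          rw [Nat.zero_add] at hw
          rw [hL0, hp 0 (by omega) (by omega)] at hw
          exact absurd (le_trans hw hLq) (not_le.mpr hI)
        · obtain ⟨r, hrp⟩ : ∃ r, p = r + 1 := ⟨p - 1, by omega⟩
          have hrM : τt (κ r) < τt (κ qM) := hpprev r hrp
          have hra : τt (κ r) < τt (κ (r + 1)) := by
            rw [hp (r + 1) (by omega) (by omega)]
            exact hrM
          obtain ⟨hHLr, hHr, hLr⟩ := hasc r (by omega) hra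
          have hkM : ∀ k, r < k → k ≤ r + (q - r) →
              τt (∑ jj ∈ Finset.range (N + 2), κ jj) < τt (κ k) := by
            intro k h1 h2
            rw [hp k (by omega) (by omega)]
            exact hI
          have hwL := walkL_down (q - r) r (by omega)
            (by rw [show r + (q - r) = q from by omega]; exact hLq) hkM
          rw [show r + (q - r) = q from by omega] at hwL
          have hHrT : τt (highSum κ r (N + 2)) < τt (∑ jj ∈ Finset.range (N + 2), κ jj) :=
            lt_of_lt_of_le hHLr (le_trans hwL hLq)
          have hwH := walkH_down (q - r) r (by omega) (le_of_lt hHrT) hkM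
          rw [show r + (q - r) = q from by omega] at hwH
          exact absurd htHq (not_le.mpr (lt_of_le_of_lt hwH hHrT))
      · -- q = N + 1
        have hq : q = N + 1 := by omega
        have hp1 : 1 ≤ p := by
          by_contra h
          have h1 := hp i (by omega) (by omega)
          have h2 := hp j (by omega) (by omega)
          rw [h1, h2] at hij
          exact lt_irrefl _ hij
        obtain ⟨r, hrp⟩ : ∃ r, p = r + 1 := ⟨p - 1, by omega⟩
        have hrM : τt (κ r) < τt (κ qM) := hpprev r hrp
        have hra : τt (κ r) < τt (κ (r + 1)) := by
          rw [hp (r + 1) (by omega) (by omega)]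
          exact hrM
        obtain ⟨hHLr, hHr, hLr⟩ := hasc r (by omega) hra
        have hkM : ∀ k, r < k → k ≤ r + (N - r) →
            τt (∑ jj ∈ Finset.range (N + 2), κ jj) < τt (κ k) := by
          intro k h1 h2
          rw [hp k (by omega) (by omega)]
          exact hI
        have hwH := walkH_down (N - r) r (by omega) hHr hkM
        rw [show r + (N - r) = N from by omega] at hwH
        rw [Hlast, hp (N + 1) (by omega) (by omega)] at hwH
        exact absurd (le_trans hwH hHr) (not_le.mpr hI)
    · -- Case II : m < t.  Consider the last block of minima.
      have hmt : τt (κ qm) < τt (∑ j ∈ Finset.range (N + 2), κ j) :=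
        lt_of_lt_of_le (lt_of_le_of_lt (hqmmin i hi) (lt_of_lt_of_le hij (hqMmax j hj))) hII
      have hQne : ((Finset.range (N + 2)).filter (fun k => τt (κ k) = τt (κ qm))).Nonempty :=
        ⟨qm, Finset.mem_filter.mpr ⟨hqmmem, rfl⟩⟩
      obtain ⟨q, hqn, hqum, hqmax⟩ : ∃ q, q < N + 2 ∧ τt (κ q) = τt (κ qm) ∧
          ∀ k, k < N + 2 → τt (κ k) = τt (κ qm) → k ≤ q := by
        refine ⟨Finset.max' _ hQne, ?_, ?_, ?_⟩
        · have := Finset.max'_mem _ hQne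
          rw [Finset.mem_filter, Finset.mem_range] at this
          exact this.1
        · have := Finset.max'_mem _ hQne
          rw [Finset.mem_filter] at this
          exact this.2
        · intro k h1 h2
          exact Finset.le_max' _ k (Finset.mem_filter.mpr ⟨Finset.mem_range.mpr h1, h2⟩)
      have hPex : ∃ p, ∀ k, p ≤ k → k ≤ q → τt (κ k) = τt (κ qm) :=
        ⟨q, fun k h1 h2 => by rw [le_antisymm h2 h1]; exact hqum⟩
      obtain ⟨p, hp, hpq, hpprev⟩ : ∃ p, (∀ k, p ≤ k → k ≤ q → τt (κ k) = τt (κ qm)) ∧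
          p ≤ q ∧ ∀ r, p = r + 1 → τt (κ qm) < τt (κ r) := by
        refine ⟨Nat.find hPex, Nat.find_spec hPex,
          Nat.find_min' hPex (fun k h1 h2 => by rw [le_antisymm h2 h1]; exact hqum), ?_⟩
        intro r hr
        have hnP := Nat.find_min hPex (m := r) (by omega)
        push_neg at hnP
        obtain ⟨k, h1, h2, h3⟩ := hnP
        have hkr : k = r := by
          rcases Nat.lt_or_ge k (Nat.find hPex) with h | h
          · omega
          · exact absurd (Nat.find_spec hPex k h h2) h3
        subst hkr
        have hle : τt (κ qm) ≤ τt (κ k) := hqmmin k (by omega)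
        exact lt_of_le_of_ne hle (fun h => h3 h.symm)
      rcases Nat.lt_or_ge q (N + 1) with hqN | hqtop
      · -- q ≤ N : strict ascent at q
        have haq : τt (κ q) < τt (κ (q + 1)) := by
          have h1 : τt (κ qm) ≤ τt (κ (q + 1)) := hqmmin (q + 1) (by omega)
          have h2 : τt (κ (q + 1)) ≠ τt (κ qm) := fun h => by
            have := hqmax (q + 1) (by omega) h; omega
          rw [hqum]
          exact lt_of_le_of_ne h1 (fun h => h2 h.symm)
        obtain ⟨hHLq, hHq, hLq⟩ := hasc q (by omega) haq
        rcases Nat.eq_zero_or_pos p with hp0 | hppos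
        · -- block starts at 0
          have hk0 : ∀ k, (0:ℕ) < k → k ≤ 0 + q →
              τt (κ k) < τt (∑ jj ∈ Finset.range (N + 2), κ jj) := by
            intro k h1 h2
            rw [hp k (by omega) (by omega)]
            exact hmt
          have hw := walkL_up q 0 (by omega) (by rw [Nat.zero_add]; exact hLq) hk0
          rw [Nat.zero_add] at hw
          rw [hL0, hp 0 (by omega) (by omega)] at hw
          exact absurd (le_trans hLq hw) (not_le.mpr hmt)
        · obtain ⟨r, hrp⟩ : ∃ r, p = r + 1 := ⟨p - 1, by omega⟩
          have hrm : τt (κ qm) < τt (κ r) := hpprev r hrp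
          have hrd : τt (κ (r + 1)) < τt (κ r) := by
            rw [hp (r + 1) (by omega) (by omega)]
            exact hrm
          obtain ⟨hLr, hHr⟩ := hdesc r (by omega) hrd
          have hkm : ∀ k, r < k → k ≤ r + (q - r) →
              τt (κ k) < τt (∑ jj ∈ Finset.range (N + 2), κ jj) := by
            intro k h1 h2
            rw [hp k (by omega) (by omega)]
            exact hmt
          have hwH := walkH_up (q - r) r (by omega) hHr hkm
          rw [show r + (q - r) = q from by omega] at hwH
          have hTLq : τt (∑ jj ∈ Finset.range (N + 2), κ jj) < τt (lowSum κ q) :=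
            lt_of_le_of_lt (le_trans hHr hwH) hHLq
          have hwL := walkL_up (q - r) r (by omega)
            (by rw [show r + (q - r) = q from by omega]; exact le_of_lt hTLq) hkm
          rw [show r + (q - r) = q from by omega] at hwL
          exact absurd hLr (not_le.mpr (lt_of_lt_of_le hTLq hwL))
      · -- q = N + 1
        have hq : q = N + 1 := by omega
        have hp1 : 1 ≤ p := by
          by_contra h
          have h1 := hp i (by omega) (by omega)
          have h2 := hp j (by omega) (by omega)
          rw [h1, h2] at hij
          exact lt_irrefl _ hij
        obtain ⟨r, hrp⟩ : ∃ r, p = r + 1 := ⟨p - 1, by omega⟩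
        have hrm : τt (κ qm) < τt (κ r) := hpprev r hrp
        have hrd : τt (κ (r + 1)) < τt (κ r) := by
          rw [hp (r + 1) (by omega) (by omega)]
          exact hrm
        obtain ⟨hLr, hHr⟩ := hdesc r (by omega) hrd
        have hkm : ∀ k, r < k → k ≤ r + (N - r) →
            τt (κ k) < τt (∑ jj ∈ Finset.range (N + 2), κ jj) := by
          intro k h1 h2
          rw [hp k (by omega) (by omega)]
          exact hmt
        have hwH := walkH_up (N - r) r (by omega) hHr hkm
        rw [show r + (N - r) = N from by omega] at hwH
        rw [Hlast, hp (N + 1) (by omega) (by omega)] at hwH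
        exact absurd (le_trans hHr hwH) (not_le.mpr hmt)
  intro i j hi hj
  by_contra hne
  rcases lt_or_gt_of_ne hne with h | h
  · exact key i j hi hj h
  · exact key j i hj hi h
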